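/- Let G' be the Type B Whitney flip of a simple graph G along (H, v1, v2). Then G' has the same vertex set as G, the same number of edges as G, and G' is connected if and only if G is connected. Consequently, when G is connected, the Betti numbers e − v + 1 of G and G' (where e is the number of edges and v the number of vertices) are equal. -/

import Mathlib

open SimpleGraph

/-- The vertex map of the Type B Whitney flip: `v1 ↦ v2`, all other vertices fixed. -/
def tauB {V : Type*} [DecidableEq V] (v1 v2 : V) (x : V) : V :=
  if x = v1 then v2 else x

/-- The Type B Whitney flip of `G` along `(H, v1, v2)` (where `v2 ∉ H`): edges with both
endpoints in `H` are mapped by `tauB v1 v2`; all other edges are kept. -/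
def typeBFlip {V : Type*} [DecidableEq V] (G : SimpleGraph V) (v1 v2 : V) (H : Set V)
    (hv2 : v2 ∉ H) : SimpleGraph V where
  Adj a b :=
    (∃ x y : V, x ∈ H ∧ y ∈ H ∧ G.Adj x y ∧ a = tauB v1 v2 x ∧ b = tauB v1 v2 y) ∨
    (¬(a ∈ H ∧ b ∈ H) ∧ G.Adj a b)
  symm := by
    constructor
    rintro a b (⟨x, y, hx, hy, h, ha, hb⟩ | ⟨hn, h⟩)
    · exact Or.inl ⟨y, x, hy, hx, h.symm, hb, ha⟩
    · exact Or.inr ⟨fun ⟨hb', ha'⟩ => hn ⟨ha', hb'⟩, h.symm⟩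
  loopless := by
    constructor
    rintro a (⟨x, y, hx, hy, h, ha, hb⟩ | ⟨_, h⟩)
    · have hxy : tauB v1 v2 x = tauB v1 v2 y := ha ▸ hb
      unfold tauB at hxy
      split_ifs at hxy with hx1 hy1 hy1
      · exact h.ne (hx1.trans hy1.symm)
      · exact hv2 (hxy ▸ hy)
      · exact hv2 (hxy ▸ hx)
      · exact h.ne hxy
    · exact G.loopless.irrefl _ h

section Aux

variable {V : Type*} [DecidableEq V] {G : SimpleGraph V} {v1 v2 : V} {H : Set V}

lemma typeBFlip_adj (hv2 : v2 ∉ H) (a b : V) :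
    (typeBFlip G v1 v2 H hv2).Adj a b ↔
      ((∃ x y : V, x ∈ H ∧ y ∈ H ∧ G.Adj x y ∧ a = tauB v1 v2 x ∧ b = tauB v1 v2 y) ∨
      (¬(a ∈ H ∧ b ∈ H) ∧ G.Adj a b)) := Iff.rfl

lemma tauB_eq_swap (hv2 : v2 ∉ H) {x : V} (hx : x ∈ H) :
    tauB v1 v2 x = Equiv.swap v1 v2 x := by
  unfold tauB
  rcases eq_or_ne x v1 with rfl | h
  · simp
  · rw [if_neg h, Equiv.swap_apply_of_ne_of_ne h (fun hxv2 => hv2 (by rwa [hxv2] at hx))]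

lemma reach_trans {A B : SimpleGraph V} (h : ∀ a b, A.Adj a b → B.Reachable a b)
    {a b : V} (hr : A.Reachable a b) : B.Reachable a b := by
  obtain ⟨w⟩ := hr
  induction w with
  | nil => exact Reachable.refl _
  | cons ha _ ih => exact (h _ _ ha).trans ih

lemma typeBFlip_edgeSet (hadj : G.Adj v1 v2) (h1 : v1 ∈ H) (hv2 : v2 ∉ H)
    (hHedge : ∀ x y : V, G.Adj x y → x ∈ H \ ({v1} : Set V) → y ∈ H) :
    (typeBFlip G v1 v2 H hv2).edgeSet =
      (Sym2.map (Equiv.swap v1 v2) '' {e ∈ G.edgeSet | ∀ v ∈ e, v ∈ H}) ∪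
      {e ∈ G.edgeSet | ¬ ∀ v ∈ e, v ∈ H} := by
  ext e
  induction e using Sym2.ind with
  | _ a b =>
    simp only [mem_edgeSet, Set.mem_union, Set.mem_image, Set.mem_setOf_eq]
    rw [typeBFlip_adj]
    constructor
    · rintro (⟨x, y, hx, hy, hxy, ha, hb⟩ | ⟨hn, hab⟩)
      · left
        refine ⟨s(x, y), ⟨hxy, ?_⟩, ?_⟩
        · intro v hv
          rcases Sym2.mem_iff.mp hv with rfl | rfl
          exacts [hx, hy]
        · rw [Sym2.map_pair_eq, ← tauB_eq_swap hv2 hx, ← tauB_eq_swap hv2 hy, ← ha, ← hb]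
      · right
        refine ⟨hab, fun hall => hn ⟨?_, ?_⟩⟩
        · exact hall a (Sym2.mem_mk_left a b)
        · exact hall b (Sym2.mem_mk_right a b)
    · rintro (⟨e, ⟨he, hall⟩, heq⟩ | ⟨hab, hn⟩)
      · induction e using Sym2.ind with
        | _ x y =>
          rw [Sym2.map_pair_eq] at heq
          have hx : x ∈ H := hall x (Sym2.mem_mk_left x y)
          have hy : y ∈ H := hall y (Sym2.mem_mk_right x y)
          rcases Sym2.eq_iff.mp heq with ⟨ha, hb⟩ | ⟨ha, hb⟩
          · exact Or.inl ⟨x, y, hx, hy, he, by rw [← ha, tauB_eq_swap hv2 hx],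
              by rw [← hb, tauB_eq_swap hv2 hy]⟩
          · exact Or.inl ⟨y, x, hy, hx, he.symm, by rw [← hb, tauB_eq_swap hv2 hy],
              by rw [← ha, tauB_eq_swap hv2 hx]⟩
      · refine Or.inr ⟨fun ⟨haH, hbH⟩ => hn ?_, hab⟩
        intro v hv
        rcases Sym2.mem_iff.mp hv with rfl | rfl
        exacts [haH, hbH]

lemma typeBFlip_disjoint (hadj : G.Adj v1 v2) (h1 : v1 ∈ H) (hv2 : v2 ∉ H)
    (hHedge : ∀ x y : V, G.Adj x y → x ∈ H \ ({v1} : Set V) → y ∈ H) :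
    Disjoint (Sym2.map (Equiv.swap v1 v2) '' {e ∈ G.edgeSet | ∀ v ∈ e, v ∈ H})
      {e ∈ G.edgeSet | ¬ ∀ v ∈ e, v ∈ H} := by
  rw [Set.disjoint_left]
  rintro e ⟨e', ⟨he', hall⟩, rfl⟩ ⟨hmem, hnall⟩
  induction e' using Sym2.ind with
  | _ x y =>
    have hx : x ∈ H := hall x (Sym2.mem_mk_left x y)
    have hy : y ∈ H := hall y (Sym2.mem_mk_right x y)
    have hxv2 : x ≠ v2 := fun h => hv2 (h ▸ hx)
    have hyv2 : y ≠ v2 := fun h => hv2 (h ▸ hy)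
    rw [Sym2.map_pair_eq] at hmem hnall
    rcases eq_or_ne x v1 with rfl | hx1
    · have hy1 : y ≠ x := fun h => (G.loopless.irrefl x (h ▸ he' : G.Adj x x))
      rw [Equiv.swap_apply_left, Equiv.swap_apply_of_ne_of_ne hy1 hyv2] at hmem
      have : G.Adj y v2 := (mem_edgeSet G).mp hmem |>.symm
      exact hv2 (hHedge y v2 this ⟨hy, hy1⟩)
    · rcases eq_or_ne y v1 with rfl | hy1
      · rw [Equiv.swap_apply_left, Equiv.swap_apply_of_ne_of_ne hx1 hxv2] at hmem
        have : G.Adj x v2 := (mem_edgeSet G).mp hmem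
        exact hv2 (hHedge x v2 this ⟨hx, hx1⟩)
      · rw [Equiv.swap_apply_of_ne_of_ne hx1 hxv2,
          Equiv.swap_apply_of_ne_of_ne hy1 hyv2] at hnall
        refine hnall fun v hv => ?_
        rcases Sym2.mem_iff.mp hv with rfl | rfl
        exacts [hx, hy]

end Aux

/-- the Type B Whitney flip has the same vertex set (both graphs live on
`V`), the same number of edges, preserves connectedness, and hence preserves the Betti
number `e - v + 1` of a connected graph. -/
theorem typeBFlip_edgeCount_connected_betti {V : Type*} [Fintype V] [DecidableEq V]
    (G : SimpleGraph V) (v1 v2 : V) (hadj : G.Adj v1 v2)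
    (H : Set V) (h1 : v1 ∈ H) (hv2 : v2 ∉ H) (hHconn : (G.induce H).Connected)
    (hHedge : ∀ x y : V, G.Adj x y → x ∈ H \ ({v1} : Set V) → y ∈ H) :
    (typeBFlip G v1 v2 H hv2).edgeSet.ncard = G.edgeSet.ncard ∧
      ((typeBFlip G v1 v2 H hv2).Connected ↔ G.Connected) ∧
      (G.Connected →
        ((typeBFlip G v1 v2 H hv2).edgeSet.ncard : ℤ) - Fintype.card V + 1 =
          (G.edgeSet.ncard : ℤ) - Fintype.card V + 1) := by
  classical
  set G' := typeBFlip G v1 v2 H hv2 with hG'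
  -- Edge count
  have hcount : G'.edgeSet.ncard = G.edgeSet.ncard := by
    have hinner_union : {e ∈ G.edgeSet | ∀ v ∈ e, v ∈ H} ∪ {e ∈ G.edgeSet | ¬ ∀ v ∈ e, v ∈ H}
        = G.edgeSet := by
      ext e
      simp only [Set.mem_union, Set.mem_setOf_eq]
      tauto
    have hdisj2 : Disjoint {e ∈ G.edgeSet | ∀ v ∈ e, v ∈ H}
        {e ∈ G.edgeSet | ¬ ∀ v ∈ e, v ∈ H} := by
      rw [Set.disjoint_left]
      rintro e ⟨_, h⟩ ⟨_, hn⟩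
      exact hn h
    rw [hG', typeBFlip_edgeSet hadj h1 hv2 hHedge,
      Set.ncard_union_eq (typeBFlip_disjoint hadj h1 hv2 hHedge) (Set.toFinite _)
        (Set.toFinite _),
      Set.ncard_image_of_injective _ (Sym2.map.injective (Equiv.swap v1 v2).injective),
      ← Set.ncard_union_eq hdisj2 (Set.toFinite _) (Set.toFinite _), hinner_union]
  refine ⟨hcount, ?_, ?_⟩
  · -- Connectivity
    have key1 : ∀ a b : V, G.Adj a b → G'.Reachable a b := by
      intro a b hab
      by_cases h : a ∈ H ∧ b ∈ H
      · obtain ⟨ha, hb⟩ := h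
        have hstep : G'.Adj (tauB v1 v2 a) (tauB v1 v2 b) :=
          (typeBFlip_adj hv2 _ _).mpr (Or.inl ⟨a, b, ha, hb, hab, rfl, rfl⟩)
        have h12 : G'.Adj v1 v2 :=
          (typeBFlip_adj hv2 _ _).mpr (Or.inr ⟨fun h => hv2 h.2, hadj⟩)
        have htau : ∀ x, x ∈ H → G'.Reachable x (tauB v1 v2 x) := by
          intro x hx
          unfold tauB
          split_ifs with hx1
          · subst hx1; exact h12.reachable
          · exact Reachable.refl _
        exact ((htau a ha).trans hstep.reachable).trans (htau b hb).symm
      · exact ((typeBFlip_adj hv2 _ _).mpr (Or.inr ⟨h, hab⟩)).reachable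
    have key2 : ∀ a b : V, G'.Adj a b → G.Reachable a b := by
      intro a b hab
      rcases (typeBFlip_adj hv2 a b).mp hab with ⟨x, y, hx, hy, hxy, rfl, rfl⟩ | ⟨_, hab⟩
      · have htau : ∀ x, x ∈ H → G.Reachable x (tauB v1 v2 x) := by
          intro x hx
          unfold tauB
          split_ifs with hx1
          · subst hx1; exact hadj.reachable
          · exact Reachable.refl _
        exact ((htau x hx).symm.trans hxy.reachable).trans (htau y hy)
      · exact hab.reachable
    constructor
    · intro hc
      rw [connected_iff] at hc ⊢
      exact ⟨fun a b => reach_trans key2 (hc.1 a b), hc.2⟩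
    · intro hc
      rw [connected_iff] at hc ⊢
      exact ⟨fun a b => reach_trans key1 (hc.1 a b), hc.2⟩
  · intro _
    rw [hcount]
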